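/- For x in the set of nonincreasing nonnegative eigenvalue lists with Σxᵢ = τ > 0 and λ a partition of k with at most n parts, the Schur–Weyl distribution SW_x^k(λ) := (k!/τᵏ) · s_λ(x)/H_λ satisfies SW_x^k(λ) ≤ (k+1)^{n(n−1)/2} · exp(−k · D(λ/k ‖ x/τ)), where D denotes the Kullback–Leibler divergence. -/

import Mathlib

open scoped Classical

/-- A semistandard Young tableau of shape `l` with entries in `Fin n`, encoded as a
function on an `n × k` grid: rows weakly increase, columns strictly increase, entries
outside the diagram pinned to the row index. -/
def IsSSYT {n k : ℕ} (l : Fin n → ℕ) (T : Fin n → Fin k → Fin n) : Prop :=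
  (∀ (i : Fin n) (j j' : Fin k), j ≤ j' → (j' : ℕ) < l i → T i j ≤ T i j') ∧
  (∀ (i i' : Fin n) (j : Fin k), i < i' → (j : ℕ) < l i' → T i j < T i' j) ∧
  (∀ (i : Fin n) (j : Fin k), l i ≤ (j : ℕ) → T i j = i)

/-- The Schur polynomial `s_l(x₁,…,xₙ)` over the reals. -/
noncomputable def schurR (n k : ℕ) (l : Fin n → ℕ) (x : Fin n → ℝ) : ℝ :=
  ∑ T : Fin n → Fin k → Fin n,
    if IsSSYT l T then
      ∏ i : Fin n, ∏ j ∈ Finset.univ.filter (fun j : Fin k => (j : ℕ) < l i), x (T i j)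
    else 0

/-- The hook product `H_l` of a partition. -/
def hookProd (n : ℕ) (l : Fin n → ℕ) : ℕ :=
  ∏ i : Fin n, ∏ j ∈ Finset.range (l i),
    ((l i - j) + (Finset.univ.filter (fun i' : Fin n => i < i' ∧ j < l i')).card)

open Finset

section Aux

lemma card_filter_val_lt (k m : ℕ) (h : m ≤ k) :
    ((Finset.univ : Finset (Fin k)).filter (fun j : Fin k => (j:ℕ) < m)).card = m := by
  rcases Nat.eq_or_lt_of_le h with rfl | h'
  · rw [Finset.filter_true_of_mem (fun j _ => j.is_lt)]; simp
  · have heq : (Finset.univ.filter (fun j : Fin k => (j:ℕ) < m)) = Finset.Iio ⟨m, h'⟩ := by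
      ext j; simp [Fin.lt_def]
    rw [heq, Fin.card_Iio]

lemma prod_sub_eq_factorial (m : ℕ) : ∏ j ∈ Finset.range m, (m - j) = m.factorial := by
  induction m with
  | zero => simp
  | succ m ih =>
    rw [Finset.prod_range_succ']
    simp only [Nat.succ_sub_succ]
    rw [ih]
    simp [Nat.factorial_succ, Nat.mul_comm]

lemma multinomial_nat {ι : Type*} [DecidableEq ι] (s : Finset ι) (a : ι → ℕ) :
    (∑ i ∈ s, a i).factorial * ∏ i ∈ s, (a i) ^ (a i)
      ≤ (∑ i ∈ s, a i) ^ (∑ i ∈ s, a i) * ∏ i ∈ s, (a i).factorial := by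
  induction s using Finset.induction_on with
  | empty => simp
  | insert _ _ hi ih =>
    rename_i i s
    rw [Finset.sum_insert hi, Finset.prod_insert hi, Finset.prod_insert hi]
    set b := a i
    set R := ∑ j ∈ s, a j with hR
    set S := b + R with hS
    have hbS : b ≤ S := Nat.le_add_right _ _
    have binom : S.factorial * (b ^ b * R ^ R) ≤ S ^ S * (b.factorial * R.factorial) := by
      have hterm : S.choose b * (b ^ b * R ^ R) ≤ S ^ S := by
        have hpow : S ^ S = ∑ j ∈ Finset.range (S + 1), b ^ j * R ^ (S - j) * S.choose j := by
          rw [hS, add_pow]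
          simp
        have hle := Finset.single_le_sum
          (f := fun j => b ^ j * R ^ (S - j) * S.choose j)
          (fun j _ => Nat.zero_le _) (Finset.mem_range.mpr (Nat.lt_succ_of_le hbS))
        rw [hpow]
        calc S.choose b * (b ^ b * R ^ R) = b ^ b * R ^ (S - b) * S.choose b := by
              rw [hS, Nat.add_sub_cancel_left]; ring
          _ ≤ _ := hle
      have hfac : S.factorial = S.choose b * b.factorial * R.factorial := by
        have h2 := Nat.choose_mul_factorial_mul_factorial hbS
        rw [hS, Nat.add_sub_cancel_left] at h2
        simp only [hS]
        exact h2.symm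
      calc S.factorial * (b ^ b * R ^ R)
          = (S.choose b * (b ^ b * R ^ R)) * (b.factorial * R.factorial) := by rw [hfac]; ring
        _ ≤ S ^ S * (b.factorial * R.factorial) :=
            Nat.mul_le_mul_right _ hterm
    have hRfac : 0 < R.factorial := Nat.factorial_pos R
    refine Nat.le_of_mul_le_mul_right ?_ hRfac
    calc S.factorial * (b ^ b * ∏ j ∈ s, a j ^ a j) * R.factorial
        = (S.factorial * b ^ b) * (R.factorial * ∏ j ∈ s, a j ^ a j) := by ring
      _ ≤ (S.factorial * b ^ b) * (R ^ R * ∏ j ∈ s, (a j).factorial) :=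
          Nat.mul_le_mul_left _ ih
      _ = (S.factorial * (b ^ b * R ^ R)) * ∏ j ∈ s, (a j).factorial := by ring
      _ ≤ (S ^ S * (b.factorial * R.factorial)) * ∏ j ∈ s, (a j).factorial :=
          Nat.mul_le_mul_right _ binom
      _ = S ^ S * (b.factorial * ∏ j ∈ s, (a j).factorial) * R.factorial := by ring

lemma ssyt_ge {n k : ℕ} {l : Fin n → ℕ} {T : Fin n → Fin k → Fin n}
    (hla : Antitone l) (hT : IsSSYT l T) (i : Fin n) (j : Fin k)
    (hj : (j : ℕ) < l i) : (i : ℕ) ≤ (T i j : ℕ) := by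
  have key : ∀ m : ℕ, ∀ i : Fin n, (i : ℕ) = m → ∀ j : Fin k, (j : ℕ) < l i →
      m ≤ (T i j : ℕ) := by
    intro m
    induction m with
    | zero => intro _ _ _ _; exact Nat.zero_le _
    | succ m ih =>
      intro i him j hj
      have hm : m < n := by omega
      set i' : Fin n := ⟨m, hm⟩ with hi'
      have hii : i' < i := by simp only [Fin.lt_def, hi']; omega
      have hj' : (j : ℕ) < l i' := lt_of_lt_of_le hj (hla (le_of_lt hii))
      have h1 := ih i' rfl j hj'
      have h2 := hT.2.1 i' i j hii hj
      rw [Fin.lt_def] at h2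
      omega
  exact key (i : ℕ) i rfl j hj

noncomputable def cfn {n k : ℕ} (l : Fin n → ℕ) (T : Fin n → Fin k → Fin n) (i m : Fin n) : ℕ :=
  (Finset.univ.filter (fun j : Fin k => (j:ℕ) < l i ∧ T i j = m)).card

noncomputable def Ccard {n k : ℕ} (l : Fin n → ℕ) (T : Fin n → Fin k → Fin n)
    (i : Fin n) (m : ℕ) : ℕ :=
  (Finset.univ.filter (fun j : Fin k => (j:ℕ) < l i ∧ (T i j : ℕ) < m)).card

variable {n k : ℕ} {l : Fin n → ℕ}

lemma Ccard_eq_sum (T : Fin n → Fin k → Fin n) (i : Fin n) (m : ℕ) :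
    Ccard l T i m = ∑ m' : Fin n, if (m' : ℕ) < m then cfn l T i m' else 0 := by
  rw [Ccard, Finset.card_eq_sum_card_fiberwise (f := T i) (t := Finset.univ)
    (fun j _ => mem_univ _)]
  refine Finset.sum_congr rfl (fun m' _ => ?_)
  rw [Finset.filter_filter]
  split_ifs with hm
  · rw [cfn]
    congr 1
    ext j
    simp only [mem_filter, mem_univ, true_and]
    constructor
    · rintro ⟨⟨h1, _⟩, h3⟩; exact ⟨h1, h3⟩
    · rintro ⟨h1, h3⟩; exact ⟨⟨h1, h3 ▸ hm⟩, h3⟩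
  · rw [Finset.card_eq_zero, Finset.filter_eq_empty_iff]
    rintro j _ ⟨⟨_, h2⟩, h3⟩
    exact hm (h3 ▸ h2)

lemma Ccard_mono (T : Fin n → Fin k → Fin n) (i : Fin n) :
    Monotone (fun m => Ccard l T i m) := by
  intro m m' h
  exact Finset.card_le_card (Finset.monotone_filter_right _
    (fun j _ hj => ⟨hj.1, lt_of_lt_of_le hj.2 h⟩))

lemma ssyt_sandwich {T : Fin n → Fin k → Fin n} (hT : IsSSYT l T)
    (i : Fin n) (j : Fin k) (hj : (j : ℕ) < l i) :
    Ccard l T i (T i j : ℕ) ≤ (j : ℕ) ∧ (j : ℕ) < Ccard l T i ((T i j : ℕ) + 1) := by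
  constructor
  · have hsub : Finset.univ.filter (fun j' : Fin k => (j':ℕ) < l i ∧ (T i j' : ℕ) < (T i j : ℕ))
        ⊆ Finset.univ.filter (fun j' : Fin k => (j':ℕ) < (j:ℕ)) := by
      intro j' hj'
      simp only [mem_filter, mem_univ, true_and] at hj' ⊢
      by_contra hge
      have hle : j ≤ j' := by rw [Fin.le_def]; omega
      have := hT.1 i j j' hle hj'.1
      rw [Fin.le_def] at this
      omega
    calc Ccard l T i (T i j : ℕ) ≤ _ := Finset.card_le_card hsub
      _ = (j : ℕ) := card_filter_val_lt k j (le_of_lt j.is_lt)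
  · have hsub : Finset.univ.filter (fun j' : Fin k => (j':ℕ) < (j:ℕ) + 1)
        ⊆ Finset.univ.filter
          (fun j' : Fin k => (j':ℕ) < l i ∧ (T i j' : ℕ) < (T i j : ℕ) + 1) := by
      intro j' hj'
      simp only [mem_filter, mem_univ, true_and] at hj' ⊢
      have hle : j' ≤ j := by rw [Fin.le_def]; omega
      have := hT.1 i j' j hle hj
      rw [Fin.le_def] at this
      exact ⟨by omega, by omega⟩
    have h2 : (j : ℕ) + 1 ≤ Ccard l T i ((T i j : ℕ) + 1) := by
      calc (j : ℕ) + 1 = _ := (card_filter_val_lt k ((j:ℕ)+1) j.is_lt).symm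
        _ ≤ _ := Finset.card_le_card hsub
    omega

lemma ssyt_c_inj (hla : Antitone l) {T T' : Fin n → Fin k → Fin n}
    (hT : IsSSYT l T) (hT' : IsSSYT l T')
    (hc : ∀ i m, cfn l T i m = cfn l T' i m) : T = T' := by
  have hC : ∀ i m, Ccard l T i m = Ccard l T' i m := by
    intro i m
    rw [Ccard_eq_sum, Ccard_eq_sum]
    exact Finset.sum_congr rfl (fun m' _ => by rw [hc])
  funext i j
  by_cases hj : (j : ℕ) < l i
  · have s1 := ssyt_sandwich hT i j hj
    have s2 := ssyt_sandwich hT' i j hj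
    rw [hC, hC] at s1
    have hmono := Ccard_mono (l := l) T' i
    apply Fin.ext
    by_contra hne
    rcases Nat.lt_or_ge (T i j : ℕ) (T' i j : ℕ) with h | h
    · have := hmono (show (T i j : ℕ) + 1 ≤ (T' i j : ℕ) by omega)
      simp only at this
      omega
    · have h' : (T' i j : ℕ) < (T i j : ℕ) := by omega
      have := hmono (show (T' i j : ℕ) + 1 ≤ (T i j : ℕ) by omega)
      simp only at this
      omega
  · rw [hT.2.2 i j (le_of_not_gt hj), hT'.2.2 i j (le_of_not_gt hj)]

lemma cfn_sum {T : Fin n → Fin k → Fin n} (hlk : ∀ i, l i ≤ k) (i : Fin n) :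
    ∑ m : Fin n, cfn l T i m = l i := by
  have h := Finset.card_eq_sum_card_fiberwise
    (s := Finset.univ.filter (fun j : Fin k => (j:ℕ) < l i)) (t := Finset.univ)
    (f := T i) (fun j _ => mem_univ _)
  rw [card_filter_val_lt k (l i) (hlk i)] at h
  rw [h]
  refine Finset.sum_congr rfl (fun m _ => ?_)
  rw [cfn, Finset.filter_filter]

lemma cfn_lt_eq_zero (hla : Antitone l) {T : Fin n → Fin k → Fin n} (hT : IsSSYT l T)
    (i m : Fin n) (hm : m < i) : cfn l T i m = 0 := by
  rw [cfn, Finset.card_eq_zero, Finset.filter_eq_empty_iff]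
  rintro j _ ⟨h1, h2⟩
  have := ssyt_ge hla hT i j h1
  rw [h2] at this
  rw [Fin.lt_def] at hm
  omega

lemma ssyt_card_le (hla : Antitone l) (hlk : ∀ i, l i ≤ k) :
    (Finset.univ.filter (fun T : Fin n → Fin k → Fin n => IsSSYT l T)).card
      ≤ (k + 1) ^ (n * (n - 1) / 2) := by
  classical
  have hcfn_le : ∀ (T : Fin n → Fin k → Fin n) (i m : Fin n), cfn l T i m < k + 1 := by
    intro T i m
    have : cfn l T i m ≤ (Finset.univ : Finset (Fin k)).card := Finset.card_filter_le _ _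
    simp only [Finset.card_univ, Fintype.card_fin] at this
    omega
  set f : (Fin n → Fin k → Fin n) → ({p : Fin n × Fin n // p.1 < p.2} → Fin (k+1)) :=
    fun T p => ⟨cfn l T p.1.1 p.1.2, hcfn_le T p.1.1 p.1.2⟩ with hf
  have hinj : Set.InjOn f (Finset.univ.filter (fun T : Fin n → Fin k → Fin n => IsSSYT l T)) := by
    intro T hTmem T' hTmem' hfeq
    simp only [Finset.coe_filter, Set.mem_setOf_eq, mem_univ, true_and] at hTmem hTmem'
    have hupper : ∀ i m : Fin n, i < m → cfn l T i m = cfn l T' i m := by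
      intro i m him
      have := congrFun hfeq ⟨(i, m), him⟩
      simpa [hf, Fin.mk.injEq] using this
    refine ssyt_c_inj hla hTmem hTmem' (fun i m => ?_)
    rcases lt_trichotomy i m with h | h | h
    · exact hupper i m h
    · subst h
      have h1 := cfn_sum (T := T) hlk i
      have h2 := cfn_sum (T := T') hlk i
      rw [← Finset.add_sum_erase _ _ (mem_univ i)] at h1 h2
      have : ∑ m ∈ Finset.univ.erase i, cfn l T i m
          = ∑ m ∈ Finset.univ.erase i, cfn l T' i m := by
        refine Finset.sum_congr rfl (fun m hm => ?_)
        have hne : m ≠ i := Finset.ne_of_mem_erase hm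
        rcases lt_or_gt_of_ne hne with h | h
        · rw [cfn_lt_eq_zero hla hTmem i m h, cfn_lt_eq_zero hla hTmem' i m h]
        · exact hupper i m h
      omega
    · rw [cfn_lt_eq_zero hla hTmem i m h, cfn_lt_eq_zero hla hTmem' i m h]
  calc (Finset.univ.filter (fun T : Fin n → Fin k → Fin n => IsSSYT l T)).card
      ≤ (Finset.univ : Finset ({p : Fin n × Fin n // p.1 < p.2} → Fin (k+1))).card :=
        Finset.card_le_card_of_injOn f (fun _ _ => mem_univ _) hinj
    _ = (k + 1) ^ (n * (n - 1) / 2) := by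
        rw [Finset.card_univ, Fintype.card_fun]
        congr 1
        · rw [Fintype.card_fin]
        rw [Fintype.card_subtype]
        have hc : (Finset.univ.filter (fun p : Fin n × Fin n => p.1 < p.2)).card
            = ∑ m : Fin n, (m : ℕ) := by
          rw [Finset.card_filter, Fintype.sum_prod_type_right]
          refine Finset.sum_congr rfl (fun m _ => ?_)
          have h1 : ∑ i : Fin n, (if i < m then 1 else 0)
              = (Finset.univ.filter (fun i : Fin n => (i:ℕ) < (m:ℕ))).card := by
            rw [Finset.card_filter]
            exact Finset.sum_congr rfl (fun i _ => if_congr Fin.lt_def rfl rfl)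
          rw [h1, card_filter_val_lt n m (le_of_lt m.is_lt)]
        rw [hc, Fin.sum_univ_eq_sum_range (fun i => i), Finset.sum_range_id]

lemma hook_ge (n : ℕ) (l : Fin n → ℕ) :
    ∏ i : Fin n, (l i).factorial ≤ hookProd n l := by
  unfold hookProd
  refine Finset.prod_le_prod' (fun i _ => ?_)
  rw [← prod_sub_eq_factorial]
  exact Finset.prod_le_prod' (fun j _ => Nat.le_add_right _ _)

end Aux

/-- Eigenvalue estimation: for nonincreasing nonnegative `x` with
`∑ xᵢ = τ > 0` and `λ` a partition of `k` with at most `n` parts, the Schur–Weyl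
distribution `SW_x^k(λ) = (k!/τᵏ) s_λ(x)/H_λ` satisfies
`SW_x^k(λ) ≤ (k+1)^{n(n−1)/2} exp(−k · D(λ/k ‖ x/τ))`. -/
theorem stmt19 {n k : ℕ} (x : Fin n → ℝ) (l : Fin n → ℕ)
    (hxa : Antitone x) (hx0 : ∀ i, 0 ≤ x i) (hτ : 0 < ∑ i, x i)
    (hla : Antitone l) (hlk : ∑ i, l i = k) :
    (k.factorial : ℝ) / (∑ i, x i) ^ k * (schurR n k l x / (hookProd n l : ℝ))
      ≤ (k + 1 : ℝ) ^ (n * (n - 1) / 2) *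
        Real.exp (-(k : ℝ) *
          ∑ i, ((l i : ℝ) / k) * Real.log (((l i : ℝ) / k) / (x i / ∑ j, x j))) := by
  set τ := ∑ i, x i with hτdef
  have hl_le : ∀ i, l i ≤ k := by
    intro i
    rw [← hlk]
    exact Finset.single_le_sum (f := l) (fun _ _ => Nat.zero_le _) (Finset.mem_univ i)
  by_cases hdeg : ∃ i, 0 < l i ∧ x i = 0
  · -- degenerate case: some part positive but eigenvalue zero ⟹ Schur polynomial vanishes
    obtain ⟨i0, hl0, hxz⟩ := hdeg
    have hs : schurR n k l x = 0 := by
      rw [schurR]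
      refine Finset.sum_eq_zero (fun T _ => ?_)
      split_ifs with hT
      · have hk0 : 0 < k := lt_of_lt_of_le hl0 (hl_le i0)
        set j0 : Fin k := ⟨0, hk0⟩ with hj0
        refine Finset.prod_eq_zero (Finset.mem_univ i0) ?_
        refine Finset.prod_eq_zero (i := j0) ?_ ?_
        · simp only [mem_filter, mem_univ, true_and, hj0]
          exact hl0
        · have h1 : (i0:ℕ) ≤ (T i0 j0 : ℕ) := ssyt_ge hla hT i0 j0 (by simpa [hj0] using hl0)
          have h2 : x (T i0 j0) ≤ x i0 := hxa (by rwa [Fin.le_def])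
          have h3 := hx0 (T i0 j0)
          rw [hxz] at h2
          linarith
      · rfl
    rw [hs, zero_div, mul_zero]
    positivity
  · push_neg at hdeg
    have hxpos : ∀ i, 0 < l i → 0 < x i :=
      fun i h => lt_of_le_of_ne (hx0 i) (Ne.symm (hdeg i h))
    set N : ℕ := (Finset.univ.filter (fun T : Fin n → Fin k → Fin n => IsSSYT l T)).card with hN
    set P : ℝ := ∏ i, x i ^ l i with hP
    set Fn : ℕ := ∏ i, (l i).factorial with hFn
    set Q : ℝ := ∏ i, (l i : ℝ) ^ l i with hQ
    have hFpos : (0:ℝ) < (Fn : ℝ) := by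
      have : 0 < Fn := Finset.prod_pos (fun i _ => Nat.factorial_pos _)
      exact_mod_cast this
    have hHge : (Fn : ℝ) ≤ (hookProd n l : ℝ) := by exact_mod_cast hook_ge n l
    have hHpos : (0:ℝ) < (hookProd n l : ℝ) := lt_of_lt_of_le hFpos hHge
    have hQpos : (0:ℝ) < Q := by
      refine Finset.prod_pos (fun i _ => ?_)
      rcases Nat.eq_zero_or_pos (l i) with h | h
      · rw [h]; norm_num
      · exact pow_pos (by exact_mod_cast h) _
    have hPnn : 0 ≤ P := Finset.prod_nonneg (fun i _ => pow_nonneg (hx0 i) _)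
    -- Step A : Schur polynomial bounded by (number of SSYT) * dominant monomial
    have hA : schurR n k l x ≤ (N : ℝ) * P := by
      rw [schurR]
      have hterm : ∀ T : Fin n → Fin k → Fin n,
          (if IsSSYT l T then
            ∏ i : Fin n, ∏ j ∈ Finset.univ.filter (fun j : Fin k => (j : ℕ) < l i), x (T i j)
          else 0) ≤ (if IsSSYT l T then P else 0) := by
        intro T
        split_ifs with hT
        · refine Finset.prod_le_prod (fun i _ => Finset.prod_nonneg (fun j _ => hx0 _))
            (fun i _ => ?_)
          calc ∏ j ∈ Finset.univ.filter (fun j : Fin k => (j : ℕ) < l i), x (T i j)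
              ≤ ∏ j ∈ Finset.univ.filter (fun j : Fin k => (j : ℕ) < l i), x i := by
                refine Finset.prod_le_prod (fun j _ => hx0 _) (fun j hj => ?_)
                have hjlt : (j:ℕ) < l i := (Finset.mem_filter.mp hj).2
                exact hxa (by rw [Fin.le_def]; exact ssyt_ge hla hT i j hjlt)
            _ = x i ^ l i := by
                rw [Finset.prod_const, card_filter_val_lt k (l i) (hl_le i)]
        · exact le_refl 0
      calc (∑ T : Fin n → Fin k → Fin n,
            if IsSSYT l T then
              ∏ i : Fin n, ∏ j ∈ Finset.univ.filter (fun j : Fin k => (j : ℕ) < l i), x (T i j)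
            else 0)
          ≤ ∑ T : Fin n → Fin k → Fin n, (if IsSSYT l T then P else 0) :=
            Finset.sum_le_sum (fun T _ => hterm T)
        _ = (N : ℝ) * P := by
            rw [Finset.sum_ite, Finset.sum_const, Finset.sum_const_zero, add_zero, nsmul_eq_mul]
    -- multinomial bound in ℝ
    have hL5 : (k.factorial : ℝ) * Q ≤ (k:ℝ)^k * (Fn : ℝ) := by
      have h := multinomial_nat Finset.univ l
      rw [hlk] at h
      have : ((k.factorial * ∏ i, (l i) ^ (l i) : ℕ) : ℝ)
          ≤ ((k ^ k * ∏ i, (l i).factorial : ℕ) : ℝ) := by exact_mod_cast h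
      push_cast at this
      rw [hQ, hFn]
      push_cast
      convert this using 2
    -- product-of-quotients equals the exponential
    have hE : ∏ i, (((k:ℝ) * (x i / τ)) ^ l i / (l i : ℝ) ^ l i)
        = Real.exp (-(k : ℝ) *
            ∑ i, ((l i : ℝ) / k) * Real.log (((l i : ℝ) / k) / (x i / τ))) := by
      rw [Finset.mul_sum, Real.exp_sum]
      refine Finset.prod_congr rfl (fun i _ => ?_)
      by_cases hli : l i = 0
      · rw [hli]; simp
      · have hlpos : 0 < l i := Nat.pos_of_ne_zero hli
        have hkpos : 0 < k := lt_of_lt_of_le hlpos (hl_le i)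
        have hxipos := hxpos i hlpos
        have hp : 0 < x i / τ := div_pos hxipos hτ
        have ha : (0:ℝ) < (l i : ℝ) := by exact_mod_cast hlpos
        have hK : (0:ℝ) < (k:ℝ) := by exact_mod_cast hkpos
        have harg : ((l i : ℝ)/k)/(x i/τ) = ((k:ℝ) * (x i/τ) / (l i : ℝ))⁻¹ := by
          field_simp
        have hpos : 0 < (k:ℝ) * (x i/τ) / (l i : ℝ) := by positivity
        rw [harg, Real.log_inv, ← div_pow]
        have hexp : -(k:ℝ) * ((l i : ℝ)/(k:ℝ) * -Real.log ((k:ℝ) * (x i/τ) / (l i : ℝ)))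
            = (l i : ℝ) * Real.log ((k:ℝ) * (x i/τ) / (l i : ℝ)) := by
          field_simp
        rw [hexp, ← Real.log_pow, Real.exp_log (pow_pos hpos _)]
    -- rewriting the combined product
    have hPτ : ∏ i, (x i / τ) ^ l i = P / τ ^ k := by
      rw [← hlk, ← Finset.prod_pow_eq_pow_sum, ← Finset.prod_div_distrib]
      exact Finset.prod_congr rfl (fun i _ => div_pow _ _ _)
    have hcomb : (k:ℝ)^k * (P / τ^k) / Q = ∏ i, (((k:ℝ) * (x i / τ)) ^ l i / (l i : ℝ) ^ l i) := by
      have hKk : (k:ℝ)^k = ∏ i : Fin n, (k:ℝ)^(l i) := by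
        rw [Finset.prod_pow_eq_pow_sum, hlk]
      rw [← hPτ, hKk, hQ, ← Finset.prod_mul_distrib, ← Finset.prod_div_distrib]
      exact Finset.prod_congr rfl (fun i _ => by rw [mul_pow])
    have hNle : (N : ℝ) ≤ (k + 1 : ℝ) ^ (n * (n - 1) / 2) := by
      have := ssyt_card_le hla hl_le
      rw [hN]
      exact_mod_cast this
    have hdiv : (k.factorial : ℝ) / (Fn : ℝ) ≤ (k:ℝ)^k / Q := by
      rw [div_le_div_iff₀ hFpos hQpos]
      linarith [hL5]
    calc (k.factorial : ℝ) / τ ^ k * (schurR n k l x / (hookProd n l : ℝ))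
        ≤ (k.factorial : ℝ) / τ ^ k * (((N : ℝ) * P) / (hookProd n l : ℝ)) := by
          refine mul_le_mul_of_nonneg_left ?_ (by positivity)
          exact (div_le_div_iff_of_pos_right hHpos).mpr hA
      _ ≤ (k.factorial : ℝ) / τ ^ k * (((N : ℝ) * P) / (Fn : ℝ)) := by
          refine mul_le_mul_of_nonneg_left ?_ (by positivity)
          exact div_le_div_of_nonneg_left (by positivity) hFpos hHge
      _ = (N : ℝ) * ((k.factorial : ℝ) / (Fn : ℝ) * (P / τ ^ k)) := by ring
      _ ≤ (N : ℝ) * ((k:ℝ)^k / Q * (P / τ ^ k)) := by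
          refine mul_le_mul_of_nonneg_left ?_ (by positivity)
          exact mul_le_mul_of_nonneg_right hdiv (by positivity)
      _ = (N : ℝ) * Real.exp (-(k : ℝ) *
            ∑ i, ((l i : ℝ) / k) * Real.log (((l i : ℝ) / k) / (x i / τ))) := by
          rw [show (k:ℝ)^k / Q * (P / τ ^ k) = (k:ℝ)^k * (P / τ^k) / Q from by ring, hcomb, hE]
      _ ≤ (k + 1 : ℝ) ^ (n * (n - 1) / 2) * Real.exp (-(k : ℝ) *
            ∑ i, ((l i : ℝ) / k) * Real.log (((l i : ℝ) / k) / (x i / τ))) :=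
          mul_le_mul_of_nonneg_right hNle (le_of_lt (Real.exp_pos _))
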